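/- Unboundedness of residue characteristics: Let A be an integral domain of characteristic zero that is finitely generated as a ℤ-algebra (so the canonical map ℤ → A is injective). Then the set of characteristics of the residue fields of A at its maximal ideals is unbounded: for every natural number N there exists a maximal ideal 𝔪 ⊆ A such that A/𝔪 is a field of prime characteristic greater than N. -/

import Mathlib

universe u

instance : IsJacobsonRing ℤ := by
  rw [isJacobsonRing_iff_prime_eq]
  intro P hP
  rcases eq_or_ne P ⊥ with rfl | hne
  · refine eq_bot_iff.mpr fun x hx => ?_
    rw [Ideal.mem_jacobson_bot] at hx
    have := hx x
    rw [Int.isUnit_iff] at this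
    rcases this with h | h
    · simpa using mul_self_eq_zero.mp (by linarith)
    · nlinarith [mul_self_nonneg x]
  · haveI := hP
    haveI := IsPrime.to_maximal_ideal hne
    exact Ideal.jacobson_eq_self_of_isMaximal

lemma ringChar_prime_of_finiteType (K : Type u) [Field K] [Algebra.FiniteType ℤ K] :
    (ringChar K).Prime := by
  haveI : Module.Finite ℤ K := finite_of_finite_type_of_isJacobsonRing ℤ K
  haveI : Algebra.IsIntegral ℤ K := Algebra.IsIntegral.of_finite ℤ K
  rcases CharP.char_is_prime_or_zero K (ringChar K) with h | h
  · exact h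
  · exfalso
    haveI : CharP K 0 := h ▸ ringChar.charP K
    haveI : CharZero K := CharP.charP_to_charZero K
    have hint : IsIntegral ℤ ((algebraMap ℚ K) (1/2 : ℚ)) := Algebra.IsIntegral.isIntegral _
    have h2 : IsIntegral ℤ (1/2 : ℚ) :=
      IsIntegral.tower_bot (algebraMap ℚ K).injective hint
    obtain ⟨z, hz⟩ := IsIntegrallyClosed.isIntegral_iff.mp h2
    have h1 : (z : ℚ) = 1/2 := hz
    have h3 : (2 : ℚ) * z = 1 := by rw [h1]; ring
    have h4 : (2 : ℤ) * z = 1 := by exact_mod_cast h3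
    omega

/-- **Unboundedness of residue characteristics**: if `A` is an integral domain of characteristic
zero that is finitely generated as a `ℤ`-algebra, then for every `N` there is a maximal ideal
`𝔪 ⊆ A` whose residue field `A/𝔪` has prime characteristic greater than `N`. -/
theorem residue_characteristics_unbounded
    {A : Type u} [CommRing A] [IsDomain A] [CharZero A] [Algebra.FiniteType ℤ A] :
    ∀ N : ℕ, ∃ m : Ideal A, m.IsMaximal ∧ ∃ q : ℕ, q.Prime ∧ N < q ∧ CharP (A ⧸ m) q := by
  intro N
  haveI : IsJacobsonRing A := isJacobsonRing_of_finiteType (A := ℤ)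
  set y : A := ((N.factorial : ℕ) : A) with hy_def
  have hy : y ≠ 0 := Nat.cast_ne_zero.mpr N.factorial_ne_zero
  set S := Localization.Away y
  have hinj : Function.Injective (algebraMap A S) :=
    IsLocalization.injective S (Submonoid.powers_le.mpr (mem_nonZeroDivisors_of_ne_zero hy))
  haveI : Nontrivial S := hinj.nontrivial
  obtain ⟨J, hJ⟩ := Ideal.exists_maximal S
  obtain ⟨hm, hym⟩ := (IsLocalization.isMaximal_iff_isMaximal_disjoint S y J).mp hJ
  set m := Ideal.comap (algebraMap A S) J with hm_def
  have hq_prime : (ringChar (A ⧸ m)).Prime := by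
    letI : Field (A ⧸ m) := Ideal.Quotient.field m
    haveI : Algebra.FiniteType ℤ (A ⧸ m) :=
      Algebra.FiniteType.of_surjective
        (Ideal.Quotient.mk m).toIntAlgHom Ideal.Quotient.mk_surjective
    exact @ringChar_prime_of_finiteType (A ⧸ m) _ this
  refine ⟨m, hm, ringChar (A ⧸ m), hq_prime, ?_, ringChar.charP _⟩
  by_contra hle
  push_neg at hle
  have h0 : ((N.factorial : ℕ) : A ⧸ m) = 0 :=
    (CharP.cast_eq_zero_iff (A ⧸ m) (ringChar (A ⧸ m)) _).mpr
      (Nat.dvd_factorial hq_prime.pos hle)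
  apply hym
  rw [← Ideal.Quotient.eq_zero_iff_mem]
  show (Ideal.Quotient.mk m) ((N.factorial : ℕ) : A) = 0
  rw [map_natCast]
  exact h0
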